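/- There exist a T0 Alexandroff space X, cosheaves F and G on X, and a surjective cosheaf homomorphism α : F → G such that the kernel precosheaf U ↦ Ker(α(U)) is not a cosheaf. Concretely, take X = {a,b,c} with open sets ∅, {a}, {a,b}, {a,c}, X; F the constant functor Z on nonempty open sets with identity structure maps; G with G({a}) = Z and 0 elsewhere; and α the unique surjection. Then (Ker α)(X) = Z while the colimit of Ker α over the nerve of the cover {{a,b},{a,c}} is Z², so the cosheaf condition fails. -/

import Mathlib

open CategoryTheory CategoryTheory.Limits TopologicalSpace


/-- The minimal open set containing `x`. -/
def minOpen {X : Type} [TopologicalSpace X] (x : X) : Set X :=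
  ⋂₀ {U : Set X | IsOpen U ∧ x ∈ U}

lemma isOpen_minOpen {X : Type} [TopologicalSpace X] [AlexandrovDiscrete X] (x : X) :
    IsOpen (minOpen x) :=
  isOpen_sInter fun _ h => h.1

/-- The minimal open set containing `x`, as an element of `Opens X`. -/
def Uo {X : Type} [TopologicalSpace X] [AlexandrovDiscrete X] (x : X) : Opens X :=
  ⟨minOpen x, isOpen_minOpen x⟩

lemma minOpen_le {X : Type} [TopologicalSpace X] {x : X} {U : Opens X} (hx : x ∈ U) :
    minOpen x ⊆ (U : Set X) :=
  Set.sInter_subset_of_mem ⟨U.isOpen, hx⟩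

/-- A precosheaf of abelian groups on `X`: a covariant functor on open sets. -/
abbrev Precosheaf (X : Type) [TopologicalSpace X] := Opens X ⥤ AddCommGrpCat.{0}

variable {X : Type} [TopologicalSpace X]

/-- The nerve of an open cover: the nonempty finite intersections of its members. -/
def nerveSet (𝒰 : Set (Opens X)) : Set (Opens X) :=
  {V | (V : Set X).Nonempty ∧ ∃ s : Finset (Opens X), ↑s ⊆ 𝒰 ∧ s.Nonempty ∧ V = s.inf id}

lemma nerve_le {𝒰 : Set (Opens X)} {U : Opens X} (h : ∀ V ∈ 𝒰, V ≤ U)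
    {V : Opens X} (hV : V ∈ nerveSet 𝒰) : V ≤ U := by
  obtain ⟨-, s, hs, ⟨w, hw⟩, rfl⟩ := hV
  exact le_trans (Finset.inf_le hw) (h w (hs hw))

/-- The diagram of a precosheaf over the nerve of an open cover. -/
def nerveDiagram (F : Precosheaf X) (𝒰 : Set (Opens X)) :
    ObjectProperty.FullSubcategory (· ∈ nerveSet 𝒰) ⥤ AddCommGrpCat.{0} :=
  ObjectProperty.ι (· ∈ nerveSet 𝒰) ⋙ F

/-- The canonical cocone on the nerve diagram with apex `F(U)`. -/
def coverCocone (F : Precosheaf X) (U : Opens X) (𝒰 : Set (Opens X))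
    (h : ∀ V ∈ 𝒰, V ≤ U) : Cocone (nerveDiagram F 𝒰) where
  pt := F.obj U
  ι :=
    { app := fun V => F.map (homOfLE (nerve_le h V.2))
      naturality := fun a b f => by
        dsimp [nerveDiagram]
        rw [Category.comp_id, ← F.map_comp]
        rfl }

/-- A precosheaf is a cosheaf if for every open `U` and every open cover `𝒰` of `U`, the
canonical map from the colimit over the nerve of `𝒰` to `F(U)` is an isomorphism, i.e.
`F(U)` is the colimit of the nerve diagram. -/
def IsCosheaf (F : Precosheaf X) : Prop :=
  ∀ (U : Opens X) (𝒰 : Set (Opens X)) (h𝒰 : ∀ V ∈ 𝒰, V ≤ U), U ≤ sSup 𝒰 →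
    Nonempty (IsColimit (coverCocone F U 𝒰 h𝒰))

/-- The Alexandroff space `X(P)` of a poset `P`: open sets are the up-sets. -/
def upTop (P : Type) [Preorder P] : TopologicalSpace P where
  IsOpen := IsUpperSet
  isOpen_univ := isUpperSet_univ
  isOpen_inter _ _ := IsUpperSet.inter
  isOpen_sUnion _ h := isUpperSet_sUnion h

variable {P : Type} [PartialOrder P]

/-- The diagram of a cellular cosheaf `F : P ⥤ Ab` over the subposet `U ⊆ P`. -/
def openDiagram (F : P ⥤ AddCommGrpCat.{0}) (U : Set P) :
    ObjectProperty.FullSubcategory (· ∈ U) ⥤ AddCommGrpCat.{0} :=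
  ObjectProperty.ι (· ∈ U) ⋙ F

noncomputable def hatMap (F : P ⥤ AddCommGrpCat.{0}) {U V : Set P} (h : U ⊆ V) :
    colimit (openDiagram F U) ⟶ colimit (openDiagram F V) :=
  colimit.pre (openDiagram F V) (ObjectProperty.ιOfLE fun _ hx => h hx)

lemma hatMap_ι (F : P ⥤ AddCommGrpCat.{0}) {U V : Set P} (h : U ⊆ V)
    (j : ObjectProperty.FullSubcategory (· ∈ U)) :
    colimit.ι (openDiagram F U) j ≫ hatMap F h =
      colimit.ι (openDiagram F V) ⟨j.1, h j.2⟩ := by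
  exact colimit.ι_pre (openDiagram F V) (ObjectProperty.ιOfLE fun _ hx => h hx) j

/-- The cosheaf `F̂` on `X(P)` associated to a cellular cosheaf `F : P ⥤ Ab`,
with `F̂(U) = colim_{x ∈ U} F(x)`. -/
noncomputable def hatF (F : P ⥤ AddCommGrpCat.{0}) :
    @TopologicalSpace.Opens P (upTop P) ⥤ AddCommGrpCat.{0} where
  obj U := colimit (openDiagram F (U : Set P))
  map {U V} h := hatMap F h.le
  map_id U := by
    apply colimit.hom_ext
    intro j
    exact (hatMap_ι F (fun _ hx => hx) j).trans (by simp)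
  map_comp {U V W} f g := by
    apply colimit.hom_ext
    intro j
    exact (hatMap_ι F (f ≫ g).le j).trans
      ((hatMap_ι F g.le ⟨j.1, (show (U : Set P) ⊆ V from f.le) j.2⟩).symm.trans
        ((congrArg (· ≫ hatMap F g.le) (hatMap_ι F f.le j)).symm.trans (Category.assoc _ _ _)))

section Ker
variable {X : Type} [TopologicalSpace X]

/-- The kernel precosheaf `U ↦ Ker (α(U))` of a homomorphism of precosheaves. -/
def kerPC {F G : Precosheaf X} (α : F ⟶ G) : Precosheaf X where
  obj U := AddCommGrpCat.of (AddMonoidHom.ker (α.app U).hom)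
  map {U V} h := AddCommGrpCat.ofHom <|
    AddMonoidHom.codRestrict
      ((F.map h).hom.comp
        (AddMonoidHom.ker (α.app U).hom).subtype) _
      (fun x => by
        have hnat : (α.app V) ((F.map h) x.1) = (G.map h) ((α.app U) x.1) :=
          congrArg (fun (f : F.obj U ⟶ G.obj V) => f x.1) (α.naturality h)
        have hx : (α.app U) x.1 = 0 := x.2
        show (α.app V) ((F.map h) x.1) = 0
        rw [hnat, hx]
        exact map_zero _)
  map_id U := by
    ext x
    exact congrArg (fun (f : F.obj U ⟶ F.obj U) => f x.1) (F.map_id U)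
  map_comp {U V W} f g := by
    ext x
    exact congrArg (fun (fn : F.obj U ⟶ F.obj W) => fn x.1) (F.map_comp f g)

end Ker

namespace Stmt14

inductive Xc : Type where
  | a | b | c
deriving DecidableEq

open Xc

instance : PartialOrder Xc where
  le x y := x = y ∨ y = a
  le_refl x := Or.inl rfl
  le_trans x y z h1 h2 := by
    rcases h1 with rfl | rfl
    · exact h2
    · rcases h2 with rfl | rfl <;> exact Or.inr rfl
  le_antisymm x y h1 h2 := by
    rcases h1 with rfl | rfl
    · rfl
    · rcases h2 with rfl | rfl <;> rfl

lemma le_iff {x y : Xc} : x ≤ y ↔ (x = y ∨ y = a) := Iff.rfl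

lemma le_a (x : Xc) : x ≤ a := Or.inr rfl

instance : TopologicalSpace Xc := upTop Xc

lemma isOpen_iff {s : Set Xc} : IsOpen s ↔ IsUpperSet s := Iff.rfl

instance : AlexandrovDiscrete Xc := ⟨fun _ hS => isUpperSet_sInter hS⟩

instance : T0Space Xc := by
  rw [t0Space_iff_inseparable]
  intro x y h
  have h1 := (inseparable_iff_forall_isOpen.1 h (Set.Ici x)
    (isOpen_iff.2 (isUpperSet_Ici x))).1 Set.self_mem_Ici
  have h2 := (inseparable_iff_forall_isOpen.1 h (Set.Ici y)
    (isOpen_iff.2 (isUpperSet_Ici y))).2 Set.self_mem_Ici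
  exact le_antisymm (Set.mem_Ici.1 h1) (Set.mem_Ici.1 h2)

lemma leA {U V : Opens Xc} (h : U ≤ V) {x : Xc} (hx : x ∈ U) : x ∈ V :=
  SetLike.le_def.mp h hx

lemma mkLe {U V : Opens Xc} (h : (U : Set Xc) ⊆ (V : Set Xc)) : U ≤ V :=
  SetLike.coe_subset_coe.mp h

lemma mem_a_of_nonempty {U : Opens Xc} (h : (U : Set Xc).Nonempty) : a ∈ U := by
  obtain ⟨x, hx⟩ := h
  exact (isOpen_iff.1 U.isOpen) (le_a x) hx

def osup (S : Set Xc) (hS : a ∈ S) : Opens Xc :=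
  ⟨S, isOpen_iff.2 (fun x y hxy hx => by
    rcases le_iff.1 hxy with rfl | rfl
    · exact hx
    · exact hS)⟩

lemma mem_osup {S : Set Xc} {hS : a ∈ S} {x : Xc} : x ∈ osup S hS ↔ x ∈ S := Iff.rfl

def Ua : Opens Xc := osup {a} rfl
def Uab : Opens Xc := osup {a, b} (by simp)
def Uac : Opens Xc := osup {a, c} (by simp)

lemma mem_Ua {x : Xc} : x ∈ Ua ↔ x = a := Iff.rfl
lemma mem_Uab {x : Xc} : x ∈ Uab ↔ x = a ∨ x = b := by simp [Uab, mem_osup]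
lemma mem_Uac {x : Xc} : x ∈ Uac ↔ x = a ∨ x = c := by simp [Uac, mem_osup]

lemma a_mem_Ua : a ∈ Ua := mem_Ua.2 rfl
lemma a_mem_Uab : a ∈ Uab := mem_Uab.2 (Or.inl rfl)
lemma a_mem_Uac : a ∈ Uac := mem_Uac.2 (Or.inl rfl)
lemma b_mem_Uab : b ∈ Uab := mem_Uab.2 (Or.inr rfl)
lemma c_mem_Uac : c ∈ Uac := mem_Uac.2 (Or.inr rfl)
lemma b_not_mem_Ua : b ∉ Ua := by simp [mem_Ua]
lemma c_not_mem_Ua : c ∉ Ua := by simp [mem_Ua]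
lemma b_not_mem_Uac : b ∉ Uac := by simp [mem_Uac]
lemma c_not_mem_Uab : c ∉ Uab := by simp [mem_Uab]

lemma Uab_ne_Ua : Uab ≠ Ua := fun h => b_not_mem_Ua (h ▸ b_mem_Uab)
lemma Uac_ne_Ua : Uac ≠ Ua := fun h => c_not_mem_Ua (h ▸ c_mem_Uac)

lemma eq_Ua_of {V : Opens Xc} (hle : V ≤ Ua) (hne : (V : Set Xc).Nonempty) : V = Ua := by
  apply le_antisymm hle
  apply mkLe
  intro z hz
  rcases mem_Ua.1 hz with rfl
  exact mem_a_of_nonempty hne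

end Stmt14
namespace Stmt14
open Xc

/-! ### The cosheaf `F` -/

def FS (U : Opens Xc) : AddSubgroup ℤ where
  carrier := {n | a ∈ U ∨ n = 0}
  zero_mem' := Or.inr rfl
  add_mem' := by
    intro x y hx hy
    rcases hx with h | hx
    · exact Or.inl h
    · rcases hy with h | hy
      · exact Or.inl h
      · exact Or.inr (by rw [hx, hy, add_zero])
  neg_mem' := by
    intro x hx
    rcases hx with h | hx
    · exact Or.inl h
    · exact Or.inr (by rw [hx, neg_zero])

def Fmap {U V : Opens Xc} (h : U ≤ V) : FS U →+ FS V where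
  toFun n := ⟨n.1, by rcases n.2 with h' | h'; exacts [Or.inl (leA h h'), Or.inr h']⟩
  map_zero' := rfl
  map_add' _ _ := rfl

@[simp] lemma Fmap_val {U V : Opens Xc} (h : U ≤ V) (n : FS U) : (Fmap h n).1 = n.1 := rfl

def Fc : Precosheaf Xc where
  obj U := AddCommGrpCat.of (FS U)
  map h := AddCommGrpCat.ofHom (Fmap h.le)
  map_id U := by ext n; rfl
  map_comp f g := by ext n; rfl

/-! ### The cosheaf `G` -/

def GS (U : Opens Xc) : AddSubgroup ℤ where
  carrier := {n | U = Ua ∨ n = 0}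
  zero_mem' := Or.inr rfl
  add_mem' := by
    intro x y hx hy
    rcases hx with h | hx
    · exact Or.inl h
    · rcases hy with h | hy
      · exact Or.inl h
      · exact Or.inr (by rw [hx, hy, add_zero])
  neg_mem' := by
    intro x hx
    rcases hx with h | hx
    · exact Or.inl h
    · exact Or.inr (by rw [hx, neg_zero])

open Classical in
noncomputable def Gmap (U V : Opens Xc) : GS U →+ GS V :=
  if hV : V = Ua then
    { toFun := fun n => ⟨n.1, Or.inl hV⟩
      map_zero' := rfl
      map_add' := fun _ _ => rfl }
  else 0

lemma GS_val_eq_zero {U : Opens Xc} (hU : U ≠ Ua) (n : GS U) : n.1 = 0 :=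
  n.2.resolve_left hU

lemma GS_eq_zero {U : Opens Xc} (hU : U ≠ Ua) (n : GS U) : n = 0 :=
  Subtype.ext (GS_val_eq_zero hU n)

noncomputable def Gc : Precosheaf Xc where
  obj U := AddCommGrpCat.of (GS U)
  map {U V} _ := AddCommGrpCat.ofHom (Gmap U V)
  map_id U := by
    refine AddCommGrpCat.ext fun n => ?_
    by_cases hU : U = Ua
    · subst hU
      show Gmap Ua Ua n = n
      rw [Gmap, dif_pos rfl]
      rfl
    · show Gmap U U n = n
      rw [Gmap, dif_neg hU]
      exact (GS_eq_zero hU n).symm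
  map_comp {U V W} f g := by
    refine AddCommGrpCat.ext fun n => ?_
    show Gmap U W n = Gmap V W (Gmap U V n)
    by_cases hW : W = Ua
    · subst hW
      by_cases hV : V = Ua
      · subst hV
        rw [Gmap, dif_pos rfl]
        apply Subtype.ext
        simp [Gmap, dif_pos]
      · have hU : U ≠ Ua := fun h => hV (le_antisymm g.le (h ▸ f.le))
        have hn : n.1 = 0 := GS_val_eq_zero hU n
        rw [Gmap, dif_pos rfl]
        apply Subtype.ext
        simp [Gmap, dif_neg hV, hn]
    · rw [show Gmap U W = 0 from dif_neg hW, show Gmap V W = 0 from dif_neg hW]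
      rfl

/-! ### The homomorphism `α` -/

open Classical in
noncomputable def αapp (U : Opens Xc) : FS U →+ GS U :=
  if hU : U = Ua then
    { toFun := fun n => ⟨n.1, Or.inl hU⟩
      map_zero' := rfl
      map_add' := fun _ _ => rfl }
  else 0

lemma αapp_Ua_val (n : FS Ua) : (αapp Ua n).1 = n.1 := by
  rw [αapp, dif_pos rfl]
  rfl

noncomputable def αc : Fc ⟶ Gc where
  app U := AddCommGrpCat.ofHom (αapp U)
  naturality {U V} f := by
    ext n
    show αapp V (Fmap f.le n) = Gmap U V (αapp U n)
    by_cases hV : V = Ua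
    · subst hV
      by_cases hU : U = Ua
      · subst hU
        rw [αapp, dif_pos rfl, Gmap, dif_pos rfl]
        exact Subtype.ext rfl
      · have hn : n.1 = 0 := by
          rcases n.2 with h | h
          · exact absurd (eq_Ua_of f.le ⟨a, h⟩) hU
          · exact h
        rw [Gmap, dif_pos rfl, show αapp U = 0 from dif_neg hU, αapp, dif_pos rfl]
        apply Subtype.ext
        simp [hn]
        exact hn.trans rfl
    · rw [show αapp V = 0 from dif_neg hV, show Gmap U V = 0 from dif_neg hV]
      rfl

end Stmt14
namespace Stmt14
open Xc

/-! ### Colimit-building tools -/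

def mkIsColimit {J : Type} [CategoryTheory.Category J] {D : J ⥤ AddCommGrpCat.{0}}
    (t : Cocone D) (j₀ : J) (r : t.pt ⟶ D.obj j₀)
    (h1 : r ≫ t.ι.app j₀ = 𝟙 t.pt)
    (h2 : ∀ (c : Cocone D) (j : J), t.ι.app j ≫ r ≫ c.ι.app j₀ = c.ι.app j) :
    IsColimit t where
  desc c := r ≫ c.ι.app j₀
  fac c j := h2 c j
  uniq c m hm := by
    calc m = (r ≫ t.ι.app j₀) ≫ m := by rw [h1, Category.id_comp]
    _ = r ≫ c.ι.app j₀ := by rw [Category.assoc, hm j₀]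

def mkIsColimitTrivial {J : Type} [CategoryTheory.Category J] {D : J ⥤ AddCommGrpCat.{0}}
    (t : Cocone D) (hpt : ∀ x : t.pt, x = 0)
    (hleg : ∀ (c : Cocone D) (j : J) (x : D.obj j), c.ι.app j x = 0) :
    IsColimit t where
  desc c := 0
  fac c j := by
    ext x
    show (0 : t.pt ⟶ c.pt) (t.ι.app j x) = c.ι.app j x
    rw [hleg c j x]
    rfl
  uniq c m hm := by
    ext x
    rw [hpt x, map_zero, map_zero]

lemma cocone_w_apply {J : Type} [CategoryTheory.Category J] {D : J ⥤ AddCommGrpCat.{0}}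
    (c : Cocone D) {i j : J} (f : i ⟶ j) (x : D.obj i) :
    c.ι.app j (D.map f x) = c.ι.app i x := by
  have := c.w f
  calc c.ι.app j (D.map f x) = (D.map f ≫ c.ι.app j) x := rfl
  _ = c.ι.app i x := by rw [← this]


/-! ### Nerve membership -/

lemma mem_nerve_self {𝒰 : Set (Opens Xc)} {V : Opens Xc} (h : V ∈ 𝒰)
    (hne : (V : Set Xc).Nonempty) : V ∈ nerveSet 𝒰 :=
  ⟨hne, {V}, by simpa using h, ⟨V, Finset.mem_singleton_self V⟩, by simp⟩

lemma mem_nerve_inf {𝒰 : Set (Opens Xc)} {V₀ V : Opens Xc} (h₀ : V₀ ∈ 𝒰)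
    (hV : V ∈ nerveSet 𝒰) (hne : ((V₀ ⊓ V : Opens Xc) : Set Xc).Nonempty) :
    V₀ ⊓ V ∈ nerveSet 𝒰 := by
  classical
  obtain ⟨-, s, hs, hsne, rfl⟩ := hV
  refine ⟨hne, insert V₀ s, ?_, ⟨V₀, Finset.mem_insert_self _ _⟩, ?_⟩
  · rw [Finset.coe_insert]
    exact Set.insert_subset h₀ hs
  · rw [Finset.inf_insert]
    rfl

/-! ### `F` is a cosheaf -/

theorem Fc_isCosheaf : IsCosheaf Fc := by
  intro U 𝒰 h𝒰 hcov
  by_cases ha : a ∈ U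
  · obtain ⟨V₀, hV₀, haV₀⟩ := Opens.mem_sSup.1 (leA hcov ha)
    have hj₀ : V₀ ∈ nerveSet 𝒰 := mem_nerve_self hV₀ ⟨a, haV₀⟩
    refine ⟨mkIsColimit (coverCocone Fc U 𝒰 h𝒰) ⟨V₀, hj₀⟩ (AddCommGrpCat.ofHom
      { toFun := fun n => (⟨n.1, Or.inl haV₀⟩ : FS V₀)
        map_zero' := rfl
        map_add' := fun _ _ => rfl }) ?_ ?_⟩
    · ext n
      exact Subtype.ext rfl
    · intro c j
      obtain ⟨V, hV⟩ := j
      ext k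
      have haV : a ∈ V := mem_a_of_nonempty hV.1
      have hW : V₀ ⊓ V ∈ nerveSet 𝒰 := mem_nerve_inf hV₀ hV ⟨a, haV₀, haV⟩
      let jW : ObjectProperty.FullSubcategory (· ∈ nerveSet 𝒰) := ⟨V₀ ⊓ V, hW⟩
      let f0 : jW ⟶ ⟨V₀, hj₀⟩ := ObjectProperty.homMk (homOfLE inf_le_left)
      let f1 : jW ⟶ ⟨V, hV⟩ := ObjectProperty.homMk (homOfLE inf_le_right)
      let l : FS (V₀ ⊓ V) := ⟨k.1, Or.inl ⟨haV₀, haV⟩⟩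
      have h1 : (nerveDiagram Fc 𝒰).map f1 l = k := Subtype.ext rfl
      have key : c.ι.app ⟨V₀, hj₀⟩ ((nerveDiagram Fc 𝒰).map f0 l) = c.ι.app ⟨V, hV⟩ k := by
        rw [cocone_w_apply c f0 l, ← h1, cocone_w_apply c f1 l]
      exact key
  · refine ⟨mkIsColimitTrivial _ ?_ ?_⟩
    · intro x
      exact Subtype.ext (x.2.resolve_left ha)
    · intro c j x
      exact absurd (leA (nerve_le h𝒰 j.2) (mem_a_of_nonempty j.2.1)) ha

end Stmt14
namespace Stmt14
open Xc

theorem Gc_isCosheaf : IsCosheaf Gc := by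
  intro U 𝒰 h𝒰 hcov
  by_cases hU : U = Ua
  · subst hU
    obtain ⟨V₀, hV₀, haV₀⟩ := Opens.mem_sSup.1 (leA hcov a_mem_Ua)
    have hV₀Ua : V₀ = Ua := eq_Ua_of (h𝒰 V₀ hV₀) ⟨a, haV₀⟩
    subst hV₀Ua
    have hj₀ : Ua ∈ nerveSet 𝒰 := mem_nerve_self hV₀ ⟨a, haV₀⟩
    refine ⟨mkIsColimit (coverCocone Gc Ua 𝒰 h𝒰) ⟨Ua, hj₀⟩ (𝟙 _) ?_ ?_⟩
    · refine (Category.id_comp _).trans ?_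
      exact Gc.map_id Ua
    · intro c j
      obtain ⟨V, hV⟩ := j
      have hVUa : V = Ua := eq_Ua_of (nerve_le h𝒰 hV) hV.1
      subst hVUa
      ext x
      exact cocone_w_apply c
        (ObjectProperty.homMk (homOfLE le_rfl) : (⟨Ua, hV⟩ : ObjectProperty.FullSubcategory (· ∈ nerveSet 𝒰)) ⟶ ⟨Ua, hj₀⟩) x
  · refine ⟨mkIsColimitTrivial _ ?_ ?_⟩
    · intro x
      exact GS_eq_zero hU x
    · intro c j x
      obtain ⟨V, hV⟩ := j
      by_cases hVUa : V = Ua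
      · subst hVUa
        have haU : a ∈ U := leA (nerve_le h𝒰 hV) a_mem_Ua
        have hy : ∃ y, y ∈ U ∧ y ≠ a := by
          by_contra hy
          push_neg at hy
          exact hU (le_antisymm (mkLe fun z hz => mem_Ua.2 (hy z hz))
            (mkLe fun z hz => by rcases mem_Ua.1 hz with rfl; exact haU))
        obtain ⟨y, hyU, hyne⟩ := hy
        obtain ⟨W₀, hW₀𝒰, hyW₀⟩ := Opens.mem_sSup.1 (leA hcov hyU)
        have hW₀ : W₀ ∈ nerveSet 𝒰 := mem_nerve_self hW₀𝒰 ⟨y, hyW₀⟩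
        have hW₀Ua : W₀ ≠ Ua := fun h => hyne (mem_Ua.1 (h ▸ hyW₀))
        have hle : Ua ≤ W₀ := mkLe fun z hz => by
          rcases mem_Ua.1 hz with rfl
          exact mem_a_of_nonempty ⟨y, hyW₀⟩
        let fw : (⟨Ua, hV⟩ : ObjectProperty.FullSubcategory (· ∈ nerveSet 𝒰)) ⟶ ⟨W₀, hW₀⟩ := ObjectProperty.homMk (homOfLE hle)
        have hw := cocone_w_apply c fw x
        have hz : ((nerveDiagram Gc 𝒰).map fw x : GS W₀) = 0 := GS_eq_zero hW₀Ua _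
        rw [← hw, hz, map_zero]
      · rw [show x = 0 from GS_eq_zero hVUa x, map_zero]

end Stmt14
namespace Stmt14
open Xc

/-! ### The kernel is not a cosheaf -/

def 𝒰₀ : Set (Opens Xc) := {Uab, Uac}

lemma inf_ab_ac : Uab ⊓ Uac = Ua := by
  apply Opens.ext
  rw [Opens.coe_inf]
  ext x
  cases x <;> simp [Ua, Uab, Uac, osup, Xc.a, Xc.b, Xc.c]

lemma Ua_le_Uab : Ua ≤ Uab := mkLe fun z hz => by rcases mem_Ua.1 hz with rfl; exact a_mem_Uab
lemma Ua_le_Uac : Ua ≤ Uac := mkLe fun z hz => by rcases mem_Ua.1 hz with rfl; exact a_mem_Uac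

lemma nerve_char {V : Opens Xc} (hV : V ∈ nerveSet 𝒰₀) : V = Ua ∨ V = Uab ∨ V = Uac := by
  obtain ⟨hne, s, hs, hsne, rfl⟩ := hV
  have hmem : ∀ w ∈ s, w = Uab ∨ w = Uac := by
    intro w hw
    have := hs hw
    rcases this with h | h
    · exact Or.inl h
    · exact Or.inr h
  by_cases hab : Uab ∈ s <;> by_cases hac : Uac ∈ s
  · left
    apply le_antisymm
    · calc s.inf id ≤ Uab ⊓ Uac := le_inf (Finset.inf_le hab) (Finset.inf_le hac)
      _ = Ua := inf_ab_ac
    · apply Finset.le_inf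
      intro w hw
      rcases hmem w hw with rfl | rfl
      exacts [Ua_le_Uab, Ua_le_Uac]
  · right; left
    apply le_antisymm (Finset.inf_le hab)
    apply Finset.le_inf
    intro w hw
    rcases hmem w hw with rfl | rfl
    exacts [le_rfl, absurd hw hac]
  · right; right
    apply le_antisymm (Finset.inf_le hac)
    apply Finset.le_inf
    intro w hw
    rcases hmem w hw with rfl | rfl
    exacts [absurd hw hab, le_rfl]
  · obtain ⟨w, hw⟩ := hsne
    rcases hmem w hw with rfl | rfl
    exacts [absurd hw hab, absurd hw hac]

/-- Value of an element of the kernel precosheaf. -/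
def kval {V : Opens Xc} (k : (kerPC αc).obj V) : ℤ := k.1.1

lemma kval_map {V W : Opens Xc} (f : V ⟶ W) (k : (kerPC αc).obj V) :
    kval ((kerPC αc).map f k) = kval k := rfl

lemma kval_zero_of_Ua (k : (kerPC αc).obj Ua) : kval k = 0 := by
  have h2 : αapp Ua k.1 = 0 := k.2
  have := congrArg Subtype.val h2
  exact (αapp_Ua_val k.1).symm.trans this

open Classical in
noncomputable def legφ (V : Opens Xc) : (kerPC αc).obj V ⟶ AddCommGrpCat.of (ℤ × ℤ) :=
  AddCommGrpCat.ofHom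
  { toFun := fun k => ((if b ∈ V then kval k else 0), (if c ∈ V then kval k else 0))
    map_zero' := by simp [kval]; exact ⟨fun _ => rfl, fun _ => rfl⟩
    map_add' := fun k l => by
      have : kval (k + l) = kval k + kval l := rfl
      by_cases hb : b ∈ V <;> by_cases hc : c ∈ V <;>
        simp [hb, hc, this, Prod.ext_iff] }

open Classical in
lemma legφ_apply (V : Opens Xc) (k : (kerPC αc).obj V) :
    legφ V k = ((if b ∈ V then kval k else 0), (if c ∈ V then kval k else 0)) := rfl

open Classical in
lemma leg_nat {V W : Opens Xc} (hV : V ∈ nerveSet 𝒰₀) (hW : W ∈ nerveSet 𝒰₀)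
    (f : V ⟶ W) (k : (kerPC αc).obj V) : legφ W ((kerPC αc).map f k) = legφ V k := by
  rw [legφ_apply, legφ_apply, kval_map]
  rcases nerve_char hV with rfl | rfl | rfl
  · rw [kval_zero_of_Ua k]
    simp
  · rcases nerve_char hW with rfl | rfl | rfl
    · exact absurd (leA f.le b_mem_Uab) b_not_mem_Ua
    · rfl
    · exact absurd (leA f.le b_mem_Uab) b_not_mem_Uac
  · rcases nerve_char hW with rfl | rfl | rfl
    · exact absurd (leA f.le c_mem_Uac) c_not_mem_Ua
    · exact absurd (leA f.le c_mem_Uac) c_not_mem_Uab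
    · rfl

noncomputable def badCocone : Cocone (nerveDiagram (kerPC αc) 𝒰₀) where
  pt := AddCommGrpCat.of (ℤ × ℤ)
  ι :=
    { app := fun j => legφ j.1
      naturality := fun j j' f => by
        ext k
        show legφ j'.1 ((kerPC αc).map f.hom k) = (legφ j.1 ≫ 𝟙 _) k
        rw [leg_nat j.2 j'.2 f.hom k]
        rfl }

lemma Uab_mem_nerve : Uab ∈ nerveSet 𝒰₀ :=
  mem_nerve_self (Or.inl rfl) ⟨a, a_mem_Uab⟩

lemma Uac_mem_nerve : Uac ∈ nerveSet 𝒰₀ :=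
  mem_nerve_self (Or.inr rfl) ⟨a, a_mem_Uac⟩

noncomputable def kab : (kerPC αc).obj Uab :=
  ⟨⟨1, Or.inl a_mem_Uab⟩, by
    have : αapp Uab = 0 := dif_neg Uab_ne_Ua
    show αapp Uab _ = 0
    rw [this]
    rfl⟩

noncomputable def kac : (kerPC αc).obj Uac :=
  ⟨⟨1, Or.inl a_mem_Uac⟩, by
    have : αapp Uac = 0 := dif_neg Uac_ne_Ua
    show αapp Uac _ = 0
    rw [this]
    rfl⟩

theorem ker_not_cosheaf : ¬ IsCosheaf (kerPC αc) := by
  intro h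
  have h𝒰 : ∀ V ∈ 𝒰₀, V ≤ (⊤ : Opens Xc) := fun _ _ => le_top
  have hcov : (⊤ : Opens Xc) ≤ sSup 𝒰₀ := by
    apply mkLe
    intro x _
    cases x with
    | a => exact leA (le_sSup (Or.inl rfl)) a_mem_Uab
    | b => exact leA (le_sSup (Or.inl rfl)) b_mem_Uab
    | c => exact leA (le_sSup (Or.inr rfl)) c_mem_Uac
  obtain ⟨hc⟩ := h ⊤ 𝒰₀ h𝒰 hcov
  have hval : (coverCocone (kerPC αc) ⊤ 𝒰₀ h𝒰).ι.app ⟨Uab, Uab_mem_nerve⟩ kab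
      = (coverCocone (kerPC αc) ⊤ 𝒰₀ h𝒰).ι.app ⟨Uac, Uac_mem_nerve⟩ kac :=
    Subtype.ext (Subtype.ext rfl)
  have e1 := ConcreteCategory.congr_hom (hc.fac badCocone ⟨Uab, Uab_mem_nerve⟩) kab
  have e2 := ConcreteCategory.congr_hom (hc.fac badCocone ⟨Uac, Uac_mem_nerve⟩) kac
  have e1' : hc.desc badCocone ((coverCocone (kerPC αc) ⊤ 𝒰₀ h𝒰).ι.app ⟨Uab, Uab_mem_nerve⟩ kab)
      = legφ Uab kab := e1
  have e2' : hc.desc badCocone ((coverCocone (kerPC αc) ⊤ 𝒰₀ h𝒰).ι.app ⟨Uac, Uac_mem_nerve⟩ kac)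
      = legφ Uac kac := e2
  rw [hval, e2'] at e1'
  rw [legφ_apply, legφ_apply] at e1'
  have hb : kval kab = 1 := rfl
  have hcv : kval kac = 1 := rfl
  rw [hb, hcv] at e1'
  simp only [b_mem_Uab, c_mem_Uac, b_not_mem_Uac, c_not_mem_Uab, if_true, if_false,
    if_pos, if_neg, not_false_iff] at e1'
  replace e1' : ((0 : ℤ), (1 : ℤ)) = (1, 0) := e1'
  rw [Prod.mk.injEq] at e1'
  exact zero_ne_one e1'.1

end Stmt14

/-- There is a `T0` Alexandroff space `X`, cosheaves `F, G` on `X` and a surjective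
homomorphism `α : F → G` whose kernel precosheaf is not a cosheaf. -/
theorem stmt_14 :
    ∃ (X : Type) (_ : TopologicalSpace X) (_ : AlexandrovDiscrete X) (_ : T0Space X)
      (F G : Precosheaf X) (α : F ⟶ G),
      IsCosheaf F ∧ IsCosheaf G ∧ (∀ U : Opens X, Function.Surjective (α.app U)) ∧
        ¬ IsCosheaf (kerPC α) := by
  refine ⟨Stmt14.Xc, inferInstance, inferInstance, inferInstance, Stmt14.Fc, Stmt14.Gc,
    Stmt14.αc, Stmt14.Fc_isCosheaf, Stmt14.Gc_isCosheaf, ?_, Stmt14.ker_not_cosheaf⟩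
  intro U
  by_cases hU : U = Stmt14.Ua
  · subst hU
    intro y
    refine ⟨⟨y.1, Or.inl Stmt14.a_mem_Ua⟩, ?_⟩
    exact Subtype.ext (Stmt14.αapp_Ua_val ⟨y.1, Or.inl Stmt14.a_mem_Ua⟩)
  · intro y
    refine ⟨0, ?_⟩
    rw [map_zero]
    exact (Stmt14.GS_eq_zero hU y).symm
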